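/- Let N ≥ 1, b > 0 and p ≥ 1. There exists C > 0 with the following property: if u, v : ℝ^N → ℂ are differentiable at a point x ≠ 0, then the map y ↦ |y|^{−b}(G(u(y)) − G(v(y))), where G(z) = |z|^p z, is differentiable at x and its gradient satisfies |∇(|·|^{−b}(G∘u − G∘v))(x)| ≤ C [ |x|^{−b−1}(|u(x)|^p + |v(x)|^p)|u(x) − v(x)| + |x|^{−b}|u(x)|^p |∇(u − v)(x)| + |x|^{−b}(|u(x)|^{p−1} + |v(x)|^{p−1}) |∇v(x)| |u(x) − v(x)| ]. -/

import Mathlib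

set_option maxHeartbeats 2000000

open Real

section helpers

variable {E : Type*} [NormedAddCommGroup E] [InnerProductSpace ℝ E]

lemma myHasFDerivAt_norm_rpow {x : E} (hx : x ≠ 0) (q : ℝ) :
    HasFDerivAt (fun y : E => ‖y‖ ^ q) ((q * ‖x‖ ^ (q - 2)) • (innerSL ℝ x : E →L[ℝ] ℝ)) x := by
  have hxn : (0:ℝ) < ‖x‖ := norm_pos_iff.2 hx
  have h1 : HasFDerivAt (fun y : E => ‖y‖ ^ (2:ℕ)) ((2:ℕ) • (innerSL ℝ x : E →L[ℝ] ℝ)) x :=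
    (hasStrictFDerivAt_norm_sq x).hasFDerivAt
  have h2 : HasDerivAt (fun t : ℝ => t ^ (q/2)) (q/2 * (‖x‖^(2:ℕ)) ^ (q/2 - 1)) (‖x‖ ^ (2:ℕ)) :=
    Real.hasDerivAt_rpow_const (Or.inl (by positivity))
  have h3 := h2.comp_hasFDerivAt x h1
  have e1 : (fun t : ℝ => t ^ (q/2)) ∘ (fun y : E => ‖y‖ ^ (2:ℕ)) = fun y : E => ‖y‖ ^ q := by
    funext y
    simp only [Function.comp_apply]
    rw [← Real.rpow_natCast ‖y‖ 2, ← Real.rpow_mul (norm_nonneg y)]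
    congr 1
    push_cast; ring
  rw [e1, two_smul, smul_add, ← add_smul] at h3
  convert h3 using 2
  · rfl
  · rfl
  rw [← Real.rpow_natCast ‖x‖ 2, ← Real.rpow_mul (norm_nonneg x)]
  rw [show ((2:ℕ):ℝ) * (q / 2 - 1) = q - 2 by push_cast; ring]
  ring



lemma rpow_mem_bound {m a M : ℝ} (hm : 0 < m) (h1 : m ≤ a) (h2 : a ≤ M) (e : ℝ) :
    a ^ e ≤ m ^ e + M ^ e := by
  rcases le_or_gt 0 e with he | he
  · have : a ^ e ≤ M ^ e := Real.rpow_le_rpow (hm.le.trans h1) h2 he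
    have : (0:ℝ) ≤ m ^ e := Real.rpow_nonneg hm.le e
    linarith [Real.rpow_le_rpow (hm.le.trans h1) h2 he]
  · have h3 : a ^ e ≤ m ^ e := Real.rpow_le_rpow_of_nonpos hm h1 he.le
    have h4 : (0:ℝ) ≤ M ^ e := Real.rpow_nonneg ((hm.le.trans h1).trans h2) e
    linarith

lemma abs_rpow_sub_rpow_le {m M a c : ℝ} (q : ℝ) (hm : 0 < m)
    (ha : a ∈ Set.Icc m M) (hc : c ∈ Set.Icc m M) :
    |a ^ q - c ^ q| ≤ |q| * (m ^ (q-1) + M ^ (q-1)) * |a - c| := by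
  have hconv : Convex ℝ (Set.Icc m M) := convex_Icc m M
  have key := hconv.norm_image_sub_le_of_norm_hasDerivWithin_le
    (f := fun t : ℝ => t ^ q) (f' := fun t : ℝ => q * t ^ (q-1))
    (C := |q| * (m ^ (q-1) + M ^ (q-1)))
    (fun t ht => (Real.hasDerivAt_rpow_const (Or.inl (ne_of_gt (hm.trans_le ht.1)))).hasDerivWithinAt)
    (fun t ht => by
      rw [Real.norm_eq_abs, abs_mul]
      have h5 : |t ^ (q-1)| = t ^ (q-1) := abs_of_nonneg (Real.rpow_nonneg (hm.le.trans ht.1) _)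
      rw [h5]
      have := rpow_mem_bound hm ht.1 ht.2 (q-1)
      have : (0:ℝ) ≤ |q| := abs_nonneg q
      nlinarith [rpow_mem_bound hm ht.1 ht.2 (q-1), abs_nonneg q])
    hc ha
  simpa [Real.norm_eq_abs] using key


end helpers

noncomputable def gd' (p : ℝ) (z : ℂ) : ℂ →L[ℝ] ℂ :=
  (‖z‖ ^ p : ℝ) • (ContinuousLinearMap.id ℝ ℂ)
    + ((p * ‖z‖ ^ (p-2)) • (innerSL ℝ z : ℂ →L[ℝ] ℝ)).smulRight z

lemma gd_zero {p : ℝ} (hp : 1 ≤ p) : gd' p 0 = 0 := by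
  have h0 : (0:ℝ) ^ p = 0 := Real.zero_rpow (by linarith)
  ext h
  simp [gd', h0]

lemma hasFDerivAt_g {p : ℝ} (hp : 1 ≤ p) (z : ℂ) :
    HasFDerivAt (fun w : ℂ => (‖w‖ ^ p : ℝ) • w) (gd' p z) z := by
  rcases eq_or_ne z 0 with rfl | hz
  · rw [gd_zero hp]
    rw [hasFDerivAt_iff_isLittleO_nhds_zero]
    rw [Asymptotics.isLittleO_iff]
    intro c hc
    filter_upwards [Metric.ball_mem_nhds (0:ℂ) (lt_min one_pos hc)] with h hh
    rw [Metric.mem_ball, dist_zero_right] at hh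
    simp only [zero_add, norm_zero, ContinuousLinearMap.zero_apply, sub_zero]
    rw [Real.zero_rpow (by linarith : p ≠ 0), zero_smul, sub_zero, norm_smul,
      Real.norm_eq_abs, abs_of_nonneg (Real.rpow_nonneg (norm_nonneg h) p)]
    rcases eq_or_ne h 0 with rfl | hne
    · simp
    · have hpos : 0 < ‖h‖ := norm_pos_iff.2 hne
      have h1 : ‖h‖ ^ p ≤ ‖h‖ ^ (1:ℝ) :=
        Real.rpow_le_rpow_of_exponent_ge hpos (le_of_lt (lt_of_lt_of_le hh (min_le_left _ _))) hp
      rw [Real.rpow_one] at h1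
      have h2 : ‖h‖ ≤ c := le_of_lt (lt_of_lt_of_le hh (min_le_right _ _))
      exact mul_le_mul_of_nonneg_right (h1.trans h2) (norm_nonneg h)
  · have hc := (myHasFDerivAt_norm_rpow hz p).smul (hasFDerivAt_id z)
    exact hc


lemma rpow_mul_self_mul_self {r : ℝ} (hr : 0 < r) (p : ℝ) : r ^ (p-2) * r * r = r ^ p := by
  nth_rewrite 2 [← Real.rpow_one r]
  nth_rewrite 3 [← Real.rpow_one r]
  rw [← Real.rpow_add hr, ← Real.rpow_add hr]
  congr 1
  ring

lemma norm_gd_le {p : ℝ} (hp : 1 ≤ p) (z : ℂ) : ‖gd' p z‖ ≤ (1 + p) * ‖z‖ ^ p := by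
  rcases eq_or_ne z 0 with rfl | hz
  · have h0 : (0:ℝ) ^ p = 0 := Real.zero_rpow (by linarith)
    have hg : gd' p 0 = 0 := by ext h; simp [gd', h0]
    rw [hg]
    simp only [norm_zero]
    positivity
  · have hpos : (0:ℝ) < ‖z‖ := norm_pos_iff.2 hz
    have hrp : (0:ℝ) ≤ ‖z‖ ^ p := Real.rpow_nonneg (norm_nonneg z) p
    have h1 : ‖(‖z‖ ^ p : ℝ) • (ContinuousLinearMap.id ℝ ℂ)‖ ≤ ‖z‖ ^ p := by
      calc ‖(‖z‖ ^ p : ℝ) • (ContinuousLinearMap.id ℝ ℂ)‖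
          ≤ ‖(‖z‖ ^ p : ℝ)‖ * ‖ContinuousLinearMap.id ℝ ℂ‖ := ContinuousLinearMap.opNorm_smul_le _ _
        _ ≤ (‖z‖ ^ p) * 1 := by
            rw [Real.norm_eq_abs, abs_of_nonneg hrp]
            exact mul_le_mul_of_nonneg_left ContinuousLinearMap.norm_id_le hrp
        _ = ‖z‖ ^ p := mul_one _
    have h2 : ‖(((p * ‖z‖ ^ (p-2)) • (innerSL ℝ z : ℂ →L[ℝ] ℝ)).smulRight z)‖ ≤ p * ‖z‖ ^ p := by
      rw [ContinuousLinearMap.norm_smulRight_apply]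
      calc ‖(p * ‖z‖ ^ (p-2)) • (innerSL ℝ z : ℂ →L[ℝ] ℝ)‖ * ‖z‖
          ≤ (‖(p * ‖z‖ ^ (p-2) : ℝ)‖ * ‖(innerSL ℝ z : ℂ →L[ℝ] ℝ)‖) * ‖z‖ :=
            mul_le_mul_of_nonneg_right (ContinuousLinearMap.opNorm_smul_le _ _) (norm_nonneg z)
        _ = p * ‖z‖ ^ p := by
            rw [innerSL_apply_norm, Real.norm_eq_abs, abs_mul,
              abs_of_nonneg (by linarith : (0:ℝ) ≤ p),
              abs_of_nonneg (Real.rpow_nonneg (norm_nonneg z) _)]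
            rw [mul_assoc, mul_assoc, ← mul_assoc (‖z‖ ^ (p-2)), rpow_mul_self_mul_self hpos p]
    calc ‖gd' p z‖ ≤ ‖(‖z‖ ^ p : ℝ) • (ContinuousLinearMap.id ℝ ℂ)‖
          + ‖(((p * ‖z‖ ^ (p-2)) • (innerSL ℝ z : ℂ →L[ℝ] ℝ)).smulRight z)‖ := norm_add_le _ _
      _ ≤ ‖z‖ ^ p + p * ‖z‖ ^ p := add_le_add h1 h2
      _ = (1 + p) * ‖z‖ ^ p := by ring


noncomputable def CL (p : ℝ) : ℝ := 2 + (1+p) * ((1/2:ℝ) ^ p + (3/2:ℝ) ^ p)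

lemma CL_pos {p : ℝ} (hp : 1 ≤ p) : 0 < CL p := by
  have h1 : (0:ℝ) < (1/2:ℝ) ^ p := Real.rpow_pos_of_pos (by norm_num) p
  have h2 : (0:ℝ) < (3/2:ℝ) ^ p := Real.rpow_pos_of_pos (by norm_num) p
  unfold CL; nlinarith

lemma gp_sub_le_aux {p : ℝ} (hp : 1 ≤ p) {z w : ℂ} (hw : ‖w‖ ≤ ‖z‖) :
    ‖(‖z‖ ^ p : ℝ) • z - (‖w‖ ^ p : ℝ) • w‖ ≤ CL p * ((‖z‖ ^ p + ‖w‖ ^ p) * ‖z - w‖) := by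
  have hzp : (0:ℝ) ≤ ‖z‖ ^ p := Real.rpow_nonneg (norm_nonneg z) p
  have hwp : (0:ℝ) ≤ ‖w‖ ^ p := Real.rpow_nonneg (norm_nonneg w) p
  have h12 : (0:ℝ) < (1/2:ℝ) ^ p := Real.rpow_pos_of_pos (by norm_num) p
  have h32 : (0:ℝ) < (3/2:ℝ) ^ p := Real.rpow_pos_of_pos (by norm_num) p
  rcases le_or_gt ‖z‖ (2 * ‖z - w‖) with hA | hB
  · have h1 : ‖(‖z‖ ^ p : ℝ) • z - (‖w‖ ^ p : ℝ) • w‖ ≤ ‖z‖ ^ p * ‖z‖ + ‖w‖ ^ p * ‖w‖ := by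
      refine (norm_sub_le _ _).trans ?_
      rw [norm_smul, norm_smul, Real.norm_eq_abs, Real.norm_eq_abs,
        abs_of_nonneg hzp, abs_of_nonneg hwp]
    have h2 : ‖z‖ ^ p * ‖z‖ + ‖w‖ ^ p * ‖w‖ ≤ (‖z‖ ^ p + ‖w‖ ^ p) * ‖z‖ := by nlinarith
    have h3 : (‖z‖ ^ p + ‖w‖ ^ p) * ‖z‖ ≤ (‖z‖ ^ p + ‖w‖ ^ p) * (2 * ‖z - w‖) := by nlinarith
    have hCL : (2:ℝ) ≤ CL p := by unfold CL; nlinarith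
    have hd : (0:ℝ) ≤ ‖z - w‖ := norm_nonneg _
    have h5 : (‖z‖ ^ p + ‖w‖ ^ p) * (2 * ‖z - w‖) ≤ CL p * ((‖z‖ ^ p + ‖w‖ ^ p) * ‖z - w‖) := by
      nlinarith [mul_nonneg (by linarith : (0:ℝ) ≤ CL p - 2)
        (mul_nonneg (add_nonneg hzp hwp) hd)]
    linarith
  · have hz0 : (0:ℝ) < ‖z‖ := by
      have := norm_nonneg (z - w); linarith
    set s : Set ℂ := Metric.closedBall z (‖z‖/2) with hs
    have hzs : z ∈ s := Metric.mem_closedBall_self (by linarith)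
    have hws : w ∈ s := by
      rw [Metric.mem_closedBall, dist_eq_norm, norm_sub_rev]
      linarith
    have key := (convex_closedBall z (‖z‖/2)).norm_image_sub_le_of_norm_hasFDerivWithin_le
      (f := fun w : ℂ => (‖w‖ ^ p : ℝ) • w) (f' := gd' p)
      (C := (1+p) * ((1/2:ℝ) ^ p + (3/2:ℝ) ^ p) * ‖z‖ ^ p)
      (fun ζ _ => (hasFDerivAt_g hp ζ).hasFDerivWithinAt)
      (fun ζ hζ => by
        rw [Metric.mem_closedBall, dist_eq_norm] at hζ
        have hl : ‖z‖/2 ≤ ‖ζ‖ := by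
          have := norm_sub_norm_le z ζ
          rw [norm_sub_rev] at this
          linarith
        have hu : ‖ζ‖ ≤ (3/2) * ‖z‖ := by
          have := norm_sub_norm_le ζ z
          linarith
        have hmem := rpow_mem_bound (by linarith : (0:ℝ) < ‖z‖/2) hl hu p
        have e1 : (‖z‖/2) ^ p = (1/2:ℝ) ^ p * ‖z‖ ^ p := by
          rw [show ‖z‖/2 = (1/2:ℝ) * ‖z‖ by ring,
            Real.mul_rpow (by norm_num) (norm_nonneg z)]
        have e2 : ((3/2) * ‖z‖) ^ p = (3/2:ℝ) ^ p * ‖z‖ ^ p := by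
          rw [Real.mul_rpow (by norm_num) (norm_nonneg z)]
        have := norm_gd_le hp ζ
        have hζp : ‖ζ‖ ^ p ≤ (1/2:ℝ) ^ p * ‖z‖ ^ p + (3/2:ℝ) ^ p * ‖z‖ ^ p := by
          rw [e1, e2] at hmem; linarith
        nlinarith)
      hws hzs
    have hK : (1+p) * ((1/2:ℝ) ^ p + (3/2:ℝ) ^ p) * ‖z‖ ^ p ≤ CL p * (‖z‖ ^ p + ‖w‖ ^ p) := by
      have h4 : (1+p) * ((1/2:ℝ) ^ p + (3/2:ℝ) ^ p) ≤ CL p := by unfold CL; linarith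
      exact mul_le_mul h4 (by linarith) hzp (le_of_lt (by unfold CL; nlinarith))
    have hd : (0:ℝ) ≤ ‖z - w‖ := norm_nonneg _
    calc ‖(‖z‖ ^ p : ℝ) • z - (‖w‖ ^ p : ℝ) • w‖
        ≤ (1+p) * ((1/2:ℝ) ^ p + (3/2:ℝ) ^ p) * ‖z‖ ^ p * ‖z - w‖ := key
      _ ≤ CL p * (‖z‖ ^ p + ‖w‖ ^ p) * ‖z - w‖ := mul_le_mul_of_nonneg_right hK hd
      _ = CL p * ((‖z‖ ^ p + ‖w‖ ^ p) * ‖z - w‖) := by ring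

lemma gp_sub_le {p : ℝ} (hp : 1 ≤ p) (z w : ℂ) :
    ‖(‖z‖ ^ p : ℝ) • z - (‖w‖ ^ p : ℝ) • w‖ ≤ CL p * ((‖z‖ ^ p + ‖w‖ ^ p) * ‖z - w‖) := by
  rcases le_total ‖w‖ ‖z‖ with h | h
  · exact gp_sub_le_aux hp h
  · have := gp_sub_le_aux hp (z := w) (w := z) h
    rw [norm_sub_rev w z] at this
    rw [← neg_sub ((‖w‖ ^ p : ℝ) • w) ((‖z‖ ^ p : ℝ) • z), norm_neg]
    linarith [this]


lemma rpow_mul_self {r : ℝ} (hr : 0 < r) (p : ℝ) : r ^ (p-1) * r = r ^ p := by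
  nth_rewrite 2 [← Real.rpow_one r]
  rw [← Real.rpow_add hr]
  congr 1; ring

lemma rpow_succ' {a : ℝ} (ha : 0 ≤ a) {p : ℝ} (hp : 1 ≤ p) : a ^ p = a ^ (p-1) * a := by
  rcases eq_or_lt_of_le ha with h | h
  · rw [← h, Real.zero_rpow (by linarith : p ≠ 0), mul_zero]
  · rw [rpow_mul_self h p]

noncomputable def C2 (p : ℝ) : ℝ :=
  2*(1+p) + p*((1/2:ℝ)^(p-1)+1) + p * |p - 2| * ((1/2:ℝ)^(p-3)+1) + 2*p*((1/2:ℝ)^(p-2)+1)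

lemma C2_pos {p : ℝ} (hp : 1 ≤ p) : 0 < C2 p := by
  have h1 : (0:ℝ) < (1/2:ℝ) ^ (p-1) := Real.rpow_pos_of_pos (by norm_num) _
  have h2 : (0:ℝ) < (1/2:ℝ) ^ (p-3) := Real.rpow_pos_of_pos (by norm_num) _
  have h3 : (0:ℝ) < (1/2:ℝ) ^ (p-2) := Real.rpow_pos_of_pos (by norm_num) _
  have h4 : (0:ℝ) ≤ |p-2| := abs_nonneg _
  have t1 : (0:ℝ) < 2*(1+p) := by linarith
  have t2 : (0:ℝ) ≤ p*((1/2:ℝ)^(p-1)+1) := by positivity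
  have t3 : (0:ℝ) ≤ p * |p - 2| * ((1/2:ℝ)^(p-3)+1) := by positivity
  have t4 : (0:ℝ) ≤ 2*p*((1/2:ℝ)^(p-2)+1) := by positivity
  unfold C2; linarith

lemma gd_sub_le_aux {p : ℝ} (hp : 1 ≤ p) {z w : ℂ} (hw : ‖w‖ ≤ ‖z‖) :
    ‖gd' p z - gd' p w‖ ≤ C2 p * ((‖z‖ ^ (p-1) + ‖w‖ ^ (p-1)) * ‖z - w‖) := by
  have hp0 : (0:ℝ) < p := by linarith
  have hzp : (0:ℝ) ≤ ‖z‖ ^ (p-1) := Real.rpow_nonneg (norm_nonneg z) _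
  have hwp : (0:ℝ) ≤ ‖w‖ ^ (p-1) := Real.rpow_nonneg (norm_nonneg w) _
  have hd : (0:ℝ) ≤ ‖z - w‖ := norm_nonneg _
  have h1 : (0:ℝ) < (1/2:ℝ) ^ (p-1) := Real.rpow_pos_of_pos (by norm_num) _
  have h2 : (0:ℝ) < (1/2:ℝ) ^ (p-3) := Real.rpow_pos_of_pos (by norm_num) _
  have h3 : (0:ℝ) < (1/2:ℝ) ^ (p-2) := Real.rpow_pos_of_pos (by norm_num) _
  have h4 : (0:ℝ) ≤ |p-2| := abs_nonneg _
  rcases le_or_gt ‖z‖ (2 * ‖z - w‖) with hA | hB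
  -- Case A : far apart
  · have e1 : ‖gd' p z - gd' p w‖ ≤ (1+p) * ‖z‖ ^ p + (1+p) * ‖w‖ ^ p :=
      (norm_sub_le _ _).trans (add_le_add (norm_gd_le hp z) (norm_gd_le hp w))
    rw [rpow_succ' (norm_nonneg z) hp, rpow_succ' (norm_nonneg w) hp] at e1
    have e2 : (1+p) * (‖z‖ ^ (p-1) * ‖z‖) + (1+p) * (‖w‖ ^ (p-1) * ‖w‖)
        ≤ (1+p) * (‖z‖ ^ (p-1) + ‖w‖ ^ (p-1)) * ‖z‖ := by
      nlinarith [mul_nonneg (mul_nonneg (by linarith : (0:ℝ) ≤ 1+p) hwp)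
        (sub_nonneg.2 hw)]
    have e3 : (1+p) * (‖z‖ ^ (p-1) + ‖w‖ ^ (p-1)) * ‖z‖
        ≤ 2*(1+p) * ((‖z‖ ^ (p-1) + ‖w‖ ^ (p-1)) * ‖z - w‖) := by
      nlinarith [mul_nonneg (mul_nonneg (by linarith : (0:ℝ) ≤ 1+p) (add_nonneg hzp hwp))
        (by linarith : (0:ℝ) ≤ 2*‖z - w‖ - ‖z‖)]
    have e4 : 2*(1+p) * ((‖z‖ ^ (p-1) + ‖w‖ ^ (p-1)) * ‖z - w‖)
        ≤ C2 p * ((‖z‖ ^ (p-1) + ‖w‖ ^ (p-1)) * ‖z - w‖) := by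
      have : 2*(1+p) ≤ C2 p := by
        have t2 : (0:ℝ) ≤ p*((1/2:ℝ)^(p-1)+1) := by positivity
        have t3 : (0:ℝ) ≤ p * |p - 2| * ((1/2:ℝ)^(p-3)+1) := by positivity
        have t4 : (0:ℝ) ≤ 2*p*((1/2:ℝ)^(p-2)+1) := by positivity
        unfold C2; linarith
      exact mul_le_mul_of_nonneg_right this (mul_nonneg (by linarith) hd)
    linarith
  -- Case B : close; norms comparable
  · have hz0 : (0:ℝ) < ‖z‖ := by linarith
    set R := ‖z‖ with hR
    have hm : (0:ℝ) < (1/2)*R := by linarith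
    have hwl : (1/2)*R ≤ ‖w‖ := by
      have := norm_sub_norm_le z w
      linarith
    have hzI : ‖z‖ ∈ Set.Icc ((1/2)*R) R := ⟨by linarith, le_refl _⟩
    have hwI : ‖w‖ ∈ Set.Icc ((1/2)*R) R := ⟨hwl, hw⟩
    have habs : |‖z‖ - ‖w‖| ≤ ‖z - w‖ := abs_norm_sub_norm_le z w
    -- operator decomposition
    have hdecomp : gd' p z - gd' p w
        = ((‖z‖ ^ p - ‖w‖ ^ p : ℝ) • (ContinuousLinearMap.id ℝ ℂ))
          + (((p * ‖z‖ ^ (p-2) - p * ‖w‖ ^ (p-2)) • (innerSL ℝ z : ℂ →L[ℝ] ℝ)).smulRight z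
          + ((p * ‖w‖ ^ (p-2)) • (innerSL ℝ (z - w) : ℂ →L[ℝ] ℝ)).smulRight z
          + ((p * ‖w‖ ^ (p-2)) • (innerSL ℝ w : ℂ →L[ℝ] ℝ)).smulRight (z - w)) := by
      ext h
      simp only [gd', ContinuousLinearMap.add_apply, ContinuousLinearMap.sub_apply,
        ContinuousLinearMap.smul_apply, ContinuousLinearMap.smulRight_apply,
        ContinuousLinearMap.id_apply, ContinuousLinearMap.coe_smul', Pi.smul_apply,
        innerSL_apply_apply, inner_sub_left, smul_eq_mul, sub_smul, smul_sub]
      module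
    -- scalar estimates
    have sc1 : |‖z‖ ^ p - ‖w‖ ^ p| ≤ p * (((1/2:ℝ)^(p-1)) * R^(p-1) + R^(p-1)) * ‖z - w‖ := by
      have := abs_rpow_sub_rpow_le p hm hzI hwI
      rw [abs_of_pos hp0, Real.mul_rpow (by norm_num) (le_of_lt hz0)] at this
      calc |‖z‖ ^ p - ‖w‖ ^ p| ≤ p * ((1/2:ℝ)^(p-1) * R^(p-1) + R^(p-1)) * |‖z‖ - ‖w‖| := this
        _ ≤ p * ((1/2:ℝ)^(p-1) * R^(p-1) + R^(p-1)) * ‖z - w‖ := by gcongr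
    have sc2 : |‖z‖ ^ (p-2) - ‖w‖ ^ (p-2)| ≤
        |p - 2| * ((1/2:ℝ)^(p-3) * R^(p-3) + R^(p-3)) * ‖z - w‖ := by
      have := abs_rpow_sub_rpow_le (p-2) hm hzI hwI
      rw [show p-2-1 = p-3 by ring, Real.mul_rpow (by norm_num) (le_of_lt hz0)] at this
      calc |‖z‖ ^ (p-2) - ‖w‖ ^ (p-2)|
          ≤ |p-2| * ((1/2:ℝ)^(p-3) * R^(p-3) + R^(p-3)) * |‖z‖ - ‖w‖| := this
        _ ≤ |p-2| * ((1/2:ℝ)^(p-3) * R^(p-3) + R^(p-3)) * ‖z - w‖ := by gcongr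
    have sc3 : ‖w‖ ^ (p-2) ≤ ((1/2:ℝ)^(p-2)) * R^(p-2) + R^(p-2) := by
      have := rpow_mem_bound hm hwl hw (p-2)
      rwa [Real.mul_rpow (by norm_num) (le_of_lt hz0)] at this
    -- operator norm bounds on pieces
    have n0 : ∀ a : ℝ, ‖a • (ContinuousLinearMap.id ℝ ℂ)‖ ≤ |a| := by
      intro a
      calc ‖a • (ContinuousLinearMap.id ℝ ℂ)‖ ≤ ‖a‖ * ‖ContinuousLinearMap.id ℝ ℂ‖ :=
            ContinuousLinearMap.opNorm_smul_le _ _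
        _ ≤ |a| * 1 := by
            rw [Real.norm_eq_abs]
            exact mul_le_mul_of_nonneg_left ContinuousLinearMap.norm_id_le (abs_nonneg a)
        _ = |a| := mul_one _
    have n1 : ∀ (c : ℝ) (ζ ξ : ℂ), ‖((c • (innerSL ℝ ζ : ℂ →L[ℝ] ℝ)).smulRight ξ)‖
        ≤ |c| * ‖ζ‖ * ‖ξ‖ := by
      intro c ζ ξ
      rw [ContinuousLinearMap.norm_smulRight_apply]
      have : ‖c • (innerSL ℝ ζ : ℂ →L[ℝ] ℝ)‖ ≤ |c| * ‖ζ‖ := by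
        calc ‖c • (innerSL ℝ ζ : ℂ →L[ℝ] ℝ)‖ ≤ ‖c‖ * ‖(innerSL ℝ ζ : ℂ →L[ℝ] ℝ)‖ :=
              ContinuousLinearMap.opNorm_smul_le _ _
          _ = |c| * ‖ζ‖ := by rw [Real.norm_eq_abs, innerSL_apply_norm]
      exact mul_le_mul_of_nonneg_right this (norm_nonneg ξ)
    -- assemble
    have k0 : ‖(‖z‖ ^ p - ‖w‖ ^ p : ℝ) • (ContinuousLinearMap.id ℝ ℂ)‖
        ≤ p * ((1/2:ℝ)^(p-1) + 1) * (R^(p-1) * ‖z - w‖) := by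
      calc ‖(‖z‖ ^ p - ‖w‖ ^ p : ℝ) • (ContinuousLinearMap.id ℝ ℂ)‖ ≤ |‖z‖ ^ p - ‖w‖ ^ p| := n0 _
        _ ≤ p * (((1/2:ℝ)^(p-1)) * R^(p-1) + R^(p-1)) * ‖z - w‖ := sc1
        _ = p * ((1/2:ℝ)^(p-1) + 1) * (R^(p-1) * ‖z - w‖) := by ring
    have k1 : ‖((p * ‖z‖ ^ (p-2) - p * ‖w‖ ^ (p-2)) • (innerSL ℝ z : ℂ →L[ℝ] ℝ)).smulRight z‖
        ≤ p * |p - 2| * ((1/2:ℝ)^(p-3) + 1) * (R^(p-1) * ‖z - w‖) := by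
      calc ‖((p * ‖z‖ ^ (p-2) - p * ‖w‖ ^ (p-2)) • (innerSL ℝ z : ℂ →L[ℝ] ℝ)).smulRight z‖
          ≤ |p * ‖z‖ ^ (p-2) - p * ‖w‖ ^ (p-2)| * ‖z‖ * ‖z‖ := n1 _ _ _
        _ = p * |‖z‖ ^ (p-2) - ‖w‖ ^ (p-2)| * R * R := by
            rw [← mul_sub, abs_mul, abs_of_pos hp0]
        _ ≤ p * (|p - 2| * ((1/2:ℝ)^(p-3) * R^(p-3) + R^(p-3)) * ‖z - w‖) * R * R := by gcongr
        _ = p * |p - 2| * ((1/2:ℝ)^(p-3) + 1) * ((R^((p-1)-2) * R * R) * ‖z - w‖) := by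
            rw [show (p-1)-2 = p-3 by ring]; ring
        _ = p * |p - 2| * ((1/2:ℝ)^(p-3) + 1) * (R^(p-1) * ‖z - w‖) := by
            rw [rpow_mul_self_mul_self hz0 (p-1)]
    have k2 : ‖((p * ‖w‖ ^ (p-2)) • (innerSL ℝ (z - w) : ℂ →L[ℝ] ℝ)).smulRight z‖
        ≤ p * ((1/2:ℝ)^(p-2) + 1) * (R^(p-1) * ‖z - w‖) := by
      calc ‖((p * ‖w‖ ^ (p-2)) • (innerSL ℝ (z - w) : ℂ →L[ℝ] ℝ)).smulRight z‖
          ≤ |p * ‖w‖ ^ (p-2)| * ‖z - w‖ * ‖z‖ := n1 _ _ _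
        _ = p * ‖w‖ ^ (p-2) * ‖z - w‖ * R := by
            rw [abs_mul, abs_of_pos hp0, abs_of_nonneg (Real.rpow_nonneg (norm_nonneg w) _)]
        _ ≤ p * ((1/2:ℝ)^(p-2) * R^(p-2) + R^(p-2)) * ‖z - w‖ * R := by gcongr
        _ = p * ((1/2:ℝ)^(p-2) + 1) * ((R^((p-1)-1) * R) * ‖z - w‖) := by
            rw [show (p-1)-1 = p-2 by ring]; ring
        _ = p * ((1/2:ℝ)^(p-2) + 1) * (R^(p-1) * ‖z - w‖) := by
            rw [rpow_mul_self hz0 (p-1)]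
    have k3 : ‖((p * ‖w‖ ^ (p-2)) • (innerSL ℝ w : ℂ →L[ℝ] ℝ)).smulRight (z - w)‖
        ≤ p * ((1/2:ℝ)^(p-2) + 1) * (R^(p-1) * ‖z - w‖) := by
      calc ‖((p * ‖w‖ ^ (p-2)) • (innerSL ℝ w : ℂ →L[ℝ] ℝ)).smulRight (z - w)‖
          ≤ |p * ‖w‖ ^ (p-2)| * ‖w‖ * ‖z - w‖ := n1 _ _ _
        _ = p * ‖w‖ ^ (p-2) * ‖w‖ * ‖z - w‖ := by
            rw [abs_mul, abs_of_pos hp0, abs_of_nonneg (Real.rpow_nonneg (norm_nonneg w) _)]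
        _ ≤ p * ((1/2:ℝ)^(p-2) * R^(p-2) + R^(p-2)) * R * ‖z - w‖ := by gcongr
        _ = p * ((1/2:ℝ)^(p-2) + 1) * ((R^((p-1)-1) * R) * ‖z - w‖) := by
            rw [show (p-1)-1 = p-2 by ring]; ring
        _ = p * ((1/2:ℝ)^(p-2) + 1) * (R^(p-1) * ‖z - w‖) := by
            rw [rpow_mul_self hz0 (p-1)]
    have htot : ‖gd' p z - gd' p w‖
        ≤ (p * ((1/2:ℝ)^(p-1) + 1) + p * |p - 2| * ((1/2:ℝ)^(p-3) + 1)
            + 2 * (p * ((1/2:ℝ)^(p-2) + 1))) * (R^(p-1) * ‖z - w‖) := by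
      rw [hdecomp]
      refine (norm_add_le _ _).trans ?_
      have h5 := (norm_add_le (((p * ‖z‖ ^ (p-2) - p * ‖w‖ ^ (p-2)) • (innerSL ℝ z : ℂ →L[ℝ] ℝ)).smulRight z
          + ((p * ‖w‖ ^ (p-2)) • (innerSL ℝ (z - w) : ℂ →L[ℝ] ℝ)).smulRight z)
          (((p * ‖w‖ ^ (p-2)) • (innerSL ℝ w : ℂ →L[ℝ] ℝ)).smulRight (z - w))).trans
        (add_le_add ((norm_add_le _ _).trans (add_le_add k1 k2)) k3)
      linarith
    have hKC : p * ((1/2:ℝ)^(p-1) + 1) + p * |p - 2| * ((1/2:ℝ)^(p-3) + 1)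
        + 2 * (p * ((1/2:ℝ)^(p-2) + 1)) ≤ C2 p := by
      unfold C2; linarith
    calc ‖gd' p z - gd' p w‖
        ≤ (p * ((1/2:ℝ)^(p-1) + 1) + p * |p - 2| * ((1/2:ℝ)^(p-3) + 1)
            + 2 * (p * ((1/2:ℝ)^(p-2) + 1))) * (R^(p-1) * ‖z - w‖) := htot
      _ ≤ C2 p * (R^(p-1) * ‖z - w‖) :=
          mul_le_mul_of_nonneg_right hKC (mul_nonneg hzp hd)
      _ ≤ C2 p * ((R^(p-1) + ‖w‖^(p-1)) * ‖z - w‖) := by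
          have hC2 : (0:ℝ) ≤ C2 p := by
            have t1 : (0:ℝ) < 2*(1+p) := by linarith
            have t2 : (0:ℝ) ≤ p*((1/2:ℝ)^(p-1)+1) := by positivity
            have t3 : (0:ℝ) ≤ p * |p - 2| * ((1/2:ℝ)^(p-3)+1) := by positivity
            have t4 : (0:ℝ) ≤ 2*p*((1/2:ℝ)^(p-2)+1) := by positivity
            unfold C2; linarith
          have : R^(p-1) * ‖z - w‖ ≤ (R^(p-1) + ‖w‖^(p-1)) * ‖z - w‖ := by
            nlinarith [mul_nonneg hwp hd]
          exact mul_le_mul_of_nonneg_left this hC2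

lemma gd_sub_le {p : ℝ} (hp : 1 ≤ p) (z w : ℂ) :
    ‖gd' p z - gd' p w‖ ≤ C2 p * ((‖z‖ ^ (p-1) + ‖w‖ ^ (p-1)) * ‖z - w‖) := by
  rcases le_total ‖w‖ ‖z‖ with h | h
  · exact gd_sub_le_aux hp h
  · have := gd_sub_le_aux hp (z := w) (w := z) h
    rw [norm_sub_rev w z] at this
    rw [← neg_sub (gd' p w) (gd' p z), norm_neg]
    linarith


/-- Second-derivative-type estimate for the inhomogeneous nonlinearity, case `p ≥ 1`. -/
theorem stmt2 (N : ℕ) (hN : 1 ≤ N) (b p : ℝ) (hb : 0 < b) (hp : 1 ≤ p) :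
    ∃ C : ℝ, 0 < C ∧
      ∀ (u v : EuclideanSpace ℝ (Fin N) → ℂ) (x : EuclideanSpace ℝ (Fin N)), x ≠ 0 →
        DifferentiableAt ℝ u x → DifferentiableAt ℝ v x →
        DifferentiableAt ℝ
            (fun y => (‖y‖ ^ (-b) : ℝ) • ((‖u y‖ ^ p : ℝ) • u y - (‖v y‖ ^ p : ℝ) • v y)) x ∧
          ‖fderiv ℝ
              (fun y => (‖y‖ ^ (-b) : ℝ) • ((‖u y‖ ^ p : ℝ) • u y - (‖v y‖ ^ p : ℝ) • v y)) x‖ ≤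
            C * (‖x‖ ^ (-b - 1) * (‖u x‖ ^ p + ‖v x‖ ^ p) * ‖u x - v x‖
              + ‖x‖ ^ (-b) * ‖u x‖ ^ p * ‖fderiv ℝ (fun y => u y - v y) x‖
              + ‖x‖ ^ (-b) * (‖u x‖ ^ (p - 1) + ‖v x‖ ^ (p - 1)) * ‖fderiv ℝ v x‖
                  * ‖u x - v x‖) := by
  refine ⟨b * CL p + (1 + p) + C2 p, by nlinarith [CL_pos hp, C2_pos hp], ?_⟩
  intro u v x hx hu hv
  have hx0 : (0:ℝ) < ‖x‖ := norm_pos_iff.2 hx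
  set Du := fderiv ℝ u x with hDu
  set Dv := fderiv ℝ v x with hDv
  have hu' : HasFDerivAt u Du x := hu.hasFDerivAt
  have hv' : HasFDerivAt v Dv x := hv.hasFDerivAt
  have hgu : HasFDerivAt (fun y => (‖u y‖ ^ p : ℝ) • u y) ((gd' p (u x)).comp Du) x :=
    (hasFDerivAt_g hp (u x)).comp x hu'
  have hgv : HasFDerivAt (fun y => (‖v y‖ ^ p : ℝ) • v y) ((gd' p (v x)).comp Dv) x :=
    (hasFDerivAt_g hp (v x)).comp x hv'
  have hψ := hgu.sub hgv
  have hφ : HasFDerivAt (fun y : EuclideanSpace ℝ (Fin N) => ‖y‖ ^ (-b))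
      ((-b * ‖x‖ ^ (-b - 2)) • (innerSL ℝ x : EuclideanSpace ℝ (Fin N) →L[ℝ] ℝ)) x :=
    myHasFDerivAt_norm_rpow hx (-b)
  have hF := hφ.smul hψ
  have huv : HasFDerivAt (fun y => u y - v y) (Du - Dv) x := hu'.sub hv'
  refine ⟨hF.differentiableAt, ?_⟩
  rw [HasFDerivAt.fderiv (f := fun y => (‖y‖ ^ (-b) : ℝ) • ((‖u y‖ ^ p : ℝ) • u y - (‖v y‖ ^ p : ℝ) • v y)) hF, huv.fderiv]
  -- notation
  set ψx := (‖u x‖ ^ p : ℝ) • u x - (‖v x‖ ^ p : ℝ) • v x with hψx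
  set Ψ' := (gd' p (u x)).comp Du - (gd' p (v x)).comp Dv with hΨ'
  set φ' := (-b * ‖x‖ ^ (-b - 2)) • (innerSL ℝ x : EuclideanSpace ℝ (Fin N) →L[ℝ] ℝ) with hφ'
  have hxb : (0:ℝ) ≤ ‖x‖ ^ (-b) := Real.rpow_nonneg (norm_nonneg x) _
  have hxb1 : (0:ℝ) ≤ ‖x‖ ^ (-b-1) := Real.rpow_nonneg (norm_nonneg x) _
  -- bound on φ'
  have hφ'n : ‖φ'‖ ≤ b * ‖x‖ ^ (-b-1) := by
    calc ‖φ'‖ ≤ ‖(-b * ‖x‖ ^ (-b - 2) : ℝ)‖ * ‖(innerSL ℝ x : EuclideanSpace ℝ (Fin N) →L[ℝ] ℝ)‖ :=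
          ContinuousLinearMap.opNorm_smul_le _ _
      _ = b * (‖x‖ ^ (-b-2) * ‖x‖) := by
          rw [innerSL_apply_norm, Real.norm_eq_abs, abs_mul, abs_neg, abs_of_pos hb,
            abs_of_nonneg (Real.rpow_nonneg (norm_nonneg x) _)]
          ring
      _ = b * ‖x‖ ^ (-b-1) := by
          rw [show (-b-2 : ℝ) = (-b-1) - 1 by ring, rpow_mul_self hx0 (-b-1)]
  -- bound on ψx
  have hψxn : ‖ψx‖ ≤ CL p * ((‖u x‖ ^ p + ‖v x‖ ^ p) * ‖u x - v x‖) := gp_sub_le hp _ _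
  -- decompose Ψ'
  have hΨdec : Ψ' = (gd' p (u x)).comp (Du - Dv) + (gd' p (u x) - gd' p (v x)).comp Dv := by
    rw [hΨ', ContinuousLinearMap.comp_sub, ContinuousLinearMap.sub_comp]
    abel
  have hΨn : ‖Ψ'‖ ≤ (1 + p) * ‖u x‖ ^ p * ‖Du - Dv‖
      + C2 p * ((‖u x‖ ^ (p-1) + ‖v x‖ ^ (p-1)) * ‖u x - v x‖) * ‖Dv‖ := by
    rw [hΨdec]
    refine (norm_add_le _ _).trans (add_le_add ?_ ?_)
    · calc ‖(gd' p (u x)).comp (Du - Dv)‖ ≤ ‖gd' p (u x)‖ * ‖Du - Dv‖ :=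
            ContinuousLinearMap.opNorm_comp_le _ _
        _ ≤ (1 + p) * ‖u x‖ ^ p * ‖Du - Dv‖ := by
            have := norm_gd_le hp (u x)
            gcongr
    · calc ‖(gd' p (u x) - gd' p (v x)).comp Dv‖ ≤ ‖gd' p (u x) - gd' p (v x)‖ * ‖Dv‖ :=
            ContinuousLinearMap.opNorm_comp_le _ _
        _ ≤ C2 p * ((‖u x‖ ^ (p-1) + ‖v x‖ ^ (p-1)) * ‖u x - v x‖) * ‖Dv‖ := by
            have := gd_sub_le hp (u x) (v x)
            gcongr
  -- total
  have htot : ‖(‖x‖ ^ (-b) : ℝ) • Ψ' + φ'.smulRight ψx‖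
      ≤ ‖x‖ ^ (-b) * ((1 + p) * ‖u x‖ ^ p * ‖Du - Dv‖
          + C2 p * ((‖u x‖ ^ (p-1) + ‖v x‖ ^ (p-1)) * ‖u x - v x‖) * ‖Dv‖)
        + (b * ‖x‖ ^ (-b-1)) * (CL p * ((‖u x‖ ^ p + ‖v x‖ ^ p) * ‖u x - v x‖)) := by
    refine (norm_add_le _ _).trans (add_le_add ?_ ?_)
    · calc ‖(‖x‖ ^ (-b) : ℝ) • Ψ'‖ ≤ ‖(‖x‖ ^ (-b) : ℝ)‖ * ‖Ψ'‖ :=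
            ContinuousLinearMap.opNorm_smul_le _ _
        _ ≤ _ := by
            rw [Real.norm_eq_abs, abs_of_nonneg hxb]
            exact mul_le_mul_of_nonneg_left hΨn hxb
    · calc ‖φ'.smulRight ψx‖ = ‖φ'‖ * ‖ψx‖ := ContinuousLinearMap.norm_smulRight_apply _ _
        _ ≤ _ := by
            exact mul_le_mul hφ'n hψxn (norm_nonneg _)
              (by positivity)
  refine htot.trans ?_
  have hT1 : (0:ℝ) ≤ ‖x‖ ^ (-b - 1) * (‖u x‖ ^ p + ‖v x‖ ^ p) * ‖u x - v x‖ := by positivity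
  have hT2 : (0:ℝ) ≤ ‖x‖ ^ (-b) * ‖u x‖ ^ p * ‖Du - Dv‖ := by positivity
  have hT3 : (0:ℝ) ≤ ‖x‖ ^ (-b) * (‖u x‖ ^ (p - 1) + ‖v x‖ ^ (p - 1)) * ‖Dv‖ * ‖u x - v x‖ := by
    positivity
  have hCL := CL_pos hp
  have hC2 := C2_pos hp
  nlinarith [mul_nonneg (mul_nonneg hb.le hCL.le) (add_nonneg hT2 hT3),
    mul_nonneg (by linarith : (0:ℝ) ≤ 1 + p) (add_nonneg hT1 hT3),
    mul_nonneg hC2.le (add_nonneg hT1 hT2)]
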